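/- Let L be a finite meet-distributive meet-semilattice. Then the collection {S(α) : α ∈ L} is a simplicial complex on P; that is, it is closed under taking subsets: if T ⊆ S(α) for some α ∈ L, then T = S(β) for some β ∈ L. -/

import Mathlib

open scoped Classical

/-- An element of a poset is *join-irreducible* if it covers exactly one element. -/
def JoinIrred {L : Type*} [Preorder L] (a : L) : Prop := ∃! b : L, b ⋖ a

/-- `ell α = {p ∈ P : p ≤ α}`, the set of join-irreducible elements below `α`. -/
def ell {L : Type*} [Preorder L] (a : L) : Set L := {p | JoinIrred p ∧ p ≤ a}

/-- The set of join-irreducible elements. -/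
def Pset (L : Type*) [Preorder L] : Set L := {p | JoinIrred p}

/-- The set `N(α)` of lower neighbors of `α`, as a finset. -/
noncomputable def NF {L : Type*} [Preorder L] [Fintype L] (a : L) : Finset L :=
  Finset.univ.filter (fun b => b ⋖ a)

/-- `ell` as a finset. -/
noncomputable def ellF {L : Type*} [Preorder L] [Fintype L] (a : L) : Finset L :=
  Finset.univ.filter (fun p => JoinIrred p ∧ p ≤ a)

/-- `α' = ⋀ N(α)`, the meet of all lower neighbors of `α` (with `α' = α` if `N(α) = ∅`). -/
noncomputable def lowMeet {L : Type*} [SemilatticeInf L] [Fintype L] (a : L) : L :=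
  if h : (NF a).Nonempty then (NF a).inf' h id else a

/-- `S(α) = ℓ(α) \ ℓ(α')`. -/
noncomputable def SF {L : Type*} [SemilatticeInf L] [Fintype L] (a : L) : Finset L :=
  ellF a \ ellF (lowMeet a)

/-- An interval `[γ, β]` is Boolean if it is order-isomorphic to some `2^[k]`. -/
def IsBooleanInterval {L : Type*} [Preorder L] (γ β : L) : Prop :=
  ∃ k : ℕ, Nonempty ((Set.Icc γ β) ≃o Set (Fin k))

/-- A poset is meet-distributive if each interval `[γ, β]` such that `γ` is the meet of
the lower neighbors of `β` in `[γ, β]` is Boolean. -/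
def MeetDistributive (L : Type*) [Preorder L] : Prop :=
  ∀ γ β : L, γ ≤ β → IsGLB {x | γ ≤ x ∧ x ⋖ β} γ → IsBooleanInterval γ β

/-- A pair `(A, B)` of subsets of `P` is independent if each `α` with `B ⊆ ℓ(α)`
satisfies `A ∩ ℓ(α) ≠ ∅`. -/
def Indep {L : Type*} [Preorder L] (A B : Set L) : Prop :=
  ∀ α : L, B ⊆ ell α → (A ∩ ell α).Nonempty

/-- `⟨B⟩`, the poset ideal of `P` generated by `B ⊆ P`. -/
def idealGen {L : Type*} [Preorder L] (B : Set L) : Set L :=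
  {p | JoinIrred p ∧ ∃ q ∈ B, p ≤ q}

/-- `M(B)`, the set of maximal elements of `B`. -/
def maxElems {L : Type*} [Preorder L] (B : Set L) : Set L :=
  {b ∈ B | ∀ c ∈ B, b ≤ c → c = b}
section Aux

variable {L : Type*} [SemilatticeInf L] [Fintype L]

lemma mem_NF {a b : L} : a ∈ NF b ↔ a ⋖ b := by simp [NF]

lemma lowMeet_le_of_covBy {γ α : L} (hc : γ ⋖ α) : lowMeet α ≤ γ := by
  have hm : γ ∈ NF α := mem_NF.2 hc
  rw [lowMeet, dif_pos ⟨γ, hm⟩]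
  exact Finset.inf'_le id hm

lemma lowMeet_le (α : L) : lowMeet α ≤ α := by
  by_cases hN : (NF α).Nonempty
  · obtain ⟨γ, hγ⟩ := hN
    exact (lowMeet_le_of_covBy (mem_NF.1 hγ)).trans (mem_NF.1 hγ).le
  · rw [lowMeet, dif_neg hN]

lemma le_lowMeet {α b : L} (hN : (NF α).Nonempty) (hb : ∀ γ, γ ⋖ α → b ≤ γ) :
    b ≤ lowMeet α := by
  rw [lowMeet, dif_pos hN]
  exact Finset.le_inf' hN id fun γ hγ => hb γ (mem_NF.1 hγ)

lemma isGLB_NF {α : L} (hN : (NF α).Nonempty) :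
    IsGLB {x | lowMeet α ≤ x ∧ x ⋖ α} (lowMeet α) :=
  ⟨fun _ hx => hx.1, fun _ hb => le_lowMeet hN fun γ hγ => hb ⟨lowMeet_le_of_covBy hγ, hγ⟩⟩

lemma mem_SF {q α : L} : q ∈ SF α ↔ JoinIrred q ∧ q ≤ α ∧ ¬q ≤ lowMeet α := by
  rw [SF, Finset.mem_sdiff]
  unfold ellF
  simp only [Finset.mem_filter, Finset.mem_univ, true_and]
  tauto

lemma exists_covBy_of_lt {x α : L} (hlt : x < α) : ∃ c, x ≤ c ∧ c ⋖ α := by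
  classical
  obtain ⟨c, hc, hmax⟩ := Set.Finite.exists_maximalFor id {y : L | x ≤ y ∧ y < α}
    (Set.toFinite _) ⟨x, le_rfl, hlt⟩
  refine ⟨c, hc.1, hc.2, fun z hz hz' => ?_⟩
  exact absurd (hmax ⟨hc.1.trans hz.le, hz'⟩ hz.le) hz.not_ge

section Interval

variable {a α : L} {k : ℕ}

lemma icc_covBy_iff {x y : Set.Icc a α} : (x : L) ⋖ (y : L) ↔ x ⋖ y := by
  constructor
  · rintro ⟨hlt, hmax⟩
    exact ⟨hlt, fun z hz hz' => hmax hz hz'⟩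
  · rintro ⟨hlt, hmax⟩
    refine ⟨hlt, fun z hz hz' => ?_⟩
    have hz1 : z ∈ Set.Icc a α := ⟨x.2.1.trans hz.le, hz'.le.trans y.2.2⟩
    exact hmax (show x < (⟨z, hz1⟩ : Set.Icc a α) from hz)
      (show (⟨z, hz1⟩ : Set.Icc a α) < y from hz')

lemma e_covBy_iff (e : (Set.Icc a α) ≃o Set (Fin k)) {x y : Set.Icc a α} :
    (x : L) ⋖ (y : L) ↔ e x ⋖ e y := by
  rw [icc_covBy_iff, ← apply_covBy_apply_iff e]

lemma e_le_iff (e : (Set.Icc a α) ≃o Set (Fin k)) {x y : Set.Icc a α} :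
    (x : L) ≤ (y : L) ↔ e x ⊆ e y := by
  rw [show ((x : L) ≤ (y : L)) ↔ x ≤ y from Iff.rfl, ← e.le_iff_le]

lemma e_top (e : (Set.Icc a α) ≃o Set (Fin k)) (hx : α ∈ Set.Icc a α) :
    e ⟨α, hx⟩ = Set.univ := by
  apply Set.eq_univ_of_univ_subset
  calc (Set.univ : Set (Fin k)) = e (e.symm Set.univ) := (e.apply_symm_apply _).symm
  _ ⊆ e ⟨α, hx⟩ := e.le_iff_le.2 ((e.symm Set.univ).2.2)

lemma e_bot (e : (Set.Icc a α) ≃o Set (Fin k)) (hx : a ∈ Set.Icc a α) :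
    e ⟨a, hx⟩ = ∅ := by
  apply Set.eq_empty_of_subset_empty
  calc e ⟨a, hx⟩ ⊆ e (e.symm ∅) := e.le_iff_le.2 ((e.symm ∅).2.1)
  _ = ∅ := e.apply_symm_apply _

lemma set_covBy_sdiff {s : Set (Fin k)} {i : Fin k} (hi : i ∈ s) : s \ {i} ⋖ s := by
  have h1 : insert i (s \ {i}) = s := by
    rw [Set.insert_diff_singleton, Set.insert_eq_self.2 hi]
  have hni : i ∉ s \ {i} := fun hmem => hmem.2 rfl
  have h2 := Set.covBy_insert hni
  rwa [h1] at h2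

lemma set_covBy_univ_destruct {t : Set (Fin k)} (ht : t ⋖ Set.univ) :
    ∃ i, t = Set.univ \ {i} := by
  obtain ⟨i, hi, hins⟩ := Set.covBy_iff_exists_insert.1 ht
  refine ⟨i, subset_antisymm ?_ ?_⟩
  · intro j hj
    refine ⟨trivial, fun hji => ?_⟩
    rw [Set.mem_singleton_iff] at hji
    subst hji; exact hi hj
  · intro j hj
    have hju : j ∈ insert i t := by rw [hins]; trivial
    rcases hju with rfl | hjt
    · exact absurd rfl hj.2
    · exact hjt

end Interval

/-- The minimum of `{x ∈ [a, α] : p ≤ x}`. -/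
lemma exists_min (a α p : L) (ha : a ≤ α) (hp : p ≤ α) :
    ∃ m : L, a ≤ m ∧ m ≤ α ∧ p ≤ m ∧ ∀ x, a ≤ x → x ≤ α → p ≤ x → m ≤ x := by
  classical
  set U : Finset L := Finset.univ.filter (fun x => a ≤ x ∧ x ≤ α ∧ p ≤ x) with hU
  have hmem : ∀ x : L, x ∈ U ↔ a ≤ x ∧ x ≤ α ∧ p ≤ x := by
    intro x; simp [hU]
  have hne : U.Nonempty := ⟨α, (hmem α).2 ⟨ha, le_rfl, hp⟩⟩
  refine ⟨U.inf' hne id, ?_, ?_, ?_, ?_⟩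
  · exact Finset.le_inf' hne id fun x hx => ((hmem x).1 hx).1
  · exact Finset.inf'_le id ((hmem α).2 ⟨ha, le_rfl, hp⟩)
  · exact Finset.le_inf' hne id fun x hx => ((hmem x).1 hx).2.2
  · intro x h1 h2 h3; exact Finset.inf'_le id ((hmem x).2 ⟨h1, h2, h3⟩)

variable (h : MeetDistributive L)
include h

/-- The Boolean interval below `α`. -/
lemma get_iso {α : L} (hN : (NF α).Nonempty) :
    ∃ k : ℕ, Nonempty ((Set.Icc (lowMeet α) α) ≃o Set (Fin k)) :=
  h _ _ (lowMeet_le α) (isGLB_NF hN)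

/-- (U1): a join-irreducible `p ≤ α` fails to be below at most one lower cover of `α`. -/
lemma U1 (α : L) : ∀ p : L, JoinIrred p → p ≤ α →
    ∀ γ₁ γ₂ : L, γ₁ ⋖ α → γ₂ ⋖ α → ¬p ≤ γ₁ → ¬p ≤ γ₂ → γ₁ = γ₂ := by
  induction α using WellFoundedLT.induction with
  | _ α IH =>
  intro p hp hpα γ₁ γ₂ hc1 hc2 hn1 hn2
  by_contra hne
  rcases eq_or_lt_of_le hpα with rfl | hlt
  · obtain ⟨b, -, hub⟩ := hp
    exact hne ((hub γ₁ hc1).trans (hub γ₂ hc2).symm)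
  -- `p < α` : use the Boolean interval `[lowMeet α, α]`.
  have hN : (NF α).Nonempty := ⟨γ₁, mem_NF.2 hc1⟩
  have ha : lowMeet α ≤ α := lowMeet_le α
  obtain ⟨k, ⟨e⟩⟩ := get_iso h hN
  have hαmem : α ∈ Set.Icc (lowMeet α) α := ⟨ha, le_rfl⟩
  set T : Set.Icc (lowMeet α) α := ⟨α, hαmem⟩ with hT
  have hTe : e T = Set.univ := e_top e hαmem
  set G₁ : Set.Icc (lowMeet α) α := ⟨γ₁, lowMeet_le_of_covBy hc1, hc1.le⟩ with hG1
  set G₂ : Set.Icc (lowMeet α) α := ⟨γ₂, lowMeet_le_of_covBy hc2, hc2.le⟩ with hG2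
  obtain ⟨i₁, hi1⟩ : ∃ i, e G₁ = Set.univ \ {i} :=
    set_covBy_univ_destruct (hTe ▸ ((e_covBy_iff e).1 hc1))
  obtain ⟨i₂, hi2⟩ : ∃ i, e G₂ = Set.univ \ {i} :=
    set_covBy_univ_destruct (hTe ▸ ((e_covBy_iff e).1 hc2))
  have hine : i₁ ≠ i₂ := by
    rintro rfl
    exact hne (congrArg Subtype.val (e.injective (hi1.trans hi2.symm)))
  -- the minimum `m` of the interval elements above `p`
  obtain ⟨m, hm1, hm2, hm3, hmin⟩ := exists_min (lowMeet α) α p ha hlt.le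
  set M : Set.Icc (lowMeet α) α := ⟨m, hm1, hm2⟩ with hM
  have hmem_eM : ∀ (γ : L) (hγ : γ ⋖ α) (i : Fin k),
      e ⟨γ, lowMeet_le_of_covBy hγ, hγ.le⟩ = Set.univ \ {i} → ¬p ≤ γ → i ∈ e M := by
    intro γ hγ i hiγ hpγ
    by_contra hiM
    apply hpγ
    refine hm3.trans ((e_le_iff e (x := M) (y := ⟨γ, lowMeet_le_of_covBy hγ, hγ.le⟩)).2 ?_)
    rw [hiγ]
    intro j hj
    refine ⟨trivial, fun hji => ?_⟩
    rw [Set.mem_singleton_iff] at hji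
    subst hji; exact hiM hj
  have hi1M : i₁ ∈ e M := hmem_eM γ₁ hc1 i₁ hi1 hn1
  have hi2M : i₂ ∈ e M := hmem_eM γ₂ hc2 i₂ hi2 hn2
  -- `m < α`
  obtain ⟨c, hpc, hcα⟩ := exists_covBy_of_lt hlt
  have hmc : m ≤ c := hmin c (lowMeet_le_of_covBy hcα) hcα.le hpc
  have hmα : m < α := lt_of_le_of_lt hmc hcα.lt
  -- two lower covers of `m` avoided by `p`
  have hcov : ∀ i ∈ e M, ((e.symm (e M \ {i}) : L) ⋖ m) ∧ ¬p ≤ (e.symm (e M \ {i}) : L) := by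
    intro i hi
    have hc : (e.symm (e M \ {i}) : L) ⋖ (M : L) := by
      rw [e_covBy_iff e, e.apply_symm_apply]
      exact set_covBy_sdiff hi
    refine ⟨hc, fun hple => ?_⟩
    have := hmin _ (e.symm (e M \ {i})).2.1 (e.symm (e M \ {i})).2.2 hple
    exact absurd (lt_of_le_of_lt this hc.lt) (lt_irrefl m)
  obtain ⟨hcov1, hn1'⟩ := hcov i₁ hi1M
  obtain ⟨hcov2, hn2'⟩ := hcov i₂ hi2M
  have hceq := IH m hmα p hp hm3 _ _ hcov1 hcov2 hn1' hn2'
  have : e M \ {i₁} = e M \ {i₂} := by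
    have := congrArg e (Subtype.ext hceq : e.symm (e M \ {i₁}) = e.symm (e M \ {i₂}))
    rwa [e.apply_symm_apply, e.apply_symm_apply] at this
  have : i₂ ∈ e M \ {i₂} := this ▸ ⟨hi2M, fun hji => hine (by
    rw [Set.mem_singleton_iff] at hji; exact hji.symm)⟩
  exact this.2 rfl

/-- (U2): two join-irreducibles below `α` avoiding the same lower cover are equal. -/
lemma U2 (α : L) : ∀ γ p q : L, γ ⋖ α → JoinIrred p → JoinIrred q → p ≤ α → q ≤ α →
    ¬p ≤ γ → ¬q ≤ γ → p = q := by
  induction α using WellFoundedLT.induction with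
  | _ α IH =>
  intro γ p q hcγ hp hq hpα hqα hnp hnq
  rcases eq_or_lt_of_le hpα with rfl | hplt
  · rcases eq_or_lt_of_le hqα with rfl | hqlt
    · rfl
    · obtain ⟨c, hqc, hcp⟩ := exists_covBy_of_lt hqlt
      obtain ⟨b, -, hub⟩ := hp
      rw [(hub c hcp).trans (hub γ hcγ).symm] at hqc
      exact absurd hqc hnq
  rcases eq_or_lt_of_le hqα with rfl | hqlt
  · obtain ⟨c, hpc, hcq⟩ := exists_covBy_of_lt hplt
    obtain ⟨b, -, hub⟩ := hq
    rw [(hub c hcq).trans (hub γ hcγ).symm] at hpc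
    exact absurd hpc hnp
  -- both `p, q < α`
  have hN : (NF α).Nonempty := ⟨γ, mem_NF.2 hcγ⟩
  have ha : lowMeet α ≤ α := lowMeet_le α
  obtain ⟨k, ⟨e⟩⟩ := get_iso h hN
  have hαmem : α ∈ Set.Icc (lowMeet α) α := ⟨ha, le_rfl⟩
  have hamem : lowMeet α ∈ Set.Icc (lowMeet α) α := ⟨le_rfl, ha⟩
  have hTe : e ⟨α, hαmem⟩ = Set.univ := e_top e hαmem
  set G : Set.Icc (lowMeet α) α := ⟨γ, lowMeet_le_of_covBy hcγ, hcγ.le⟩ with hG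
  obtain ⟨i₀, hi0⟩ : ∃ i, e G = Set.univ \ {i} :=
    set_covBy_univ_destruct (hTe ▸ ((e_covBy_iff e).1 hcγ))
  have key : ∀ r : L, JoinIrred r → r < α → ¬r ≤ γ →
      ∃ (m : L) (hm : m ∈ Set.Icc (lowMeet α) α), r ≤ m ∧ e ⟨m, hm⟩ = {i₀} ∧
        (∀ x, lowMeet α ≤ x → x ≤ α → r ≤ x → m ≤ x) := by
    intro r hr hrα hnr
    obtain ⟨m, hm1, hm2, hm3, hmin⟩ := exists_min (lowMeet α) α r ha hrα.le
    refine ⟨m, ⟨hm1, hm2⟩, hm3, ?_, hmin⟩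
    set M : Set.Icc (lowMeet α) α := ⟨m, hm1, hm2⟩ with hM
    have hi0M : i₀ ∈ e M := by
      by_contra hiM
      apply hnr
      refine hm3.trans ((e_le_iff e (x := M) (y := G)).2 ?_)
      rw [hi0]
      intro j hj
      refine ⟨trivial, fun hji => ?_⟩
      rw [Set.mem_singleton_iff] at hji
      subst hji; exact hiM hj
    apply subset_antisymm
    · intro j hjM
      rw [Set.mem_singleton_iff]
      by_contra hji
      set Bj := e.symm (Set.univ \ {j}) with hBj
      have hBcov : (Bj : L) ⋖ α := by
        refine (e_covBy_iff e (x := Bj) (y := ⟨α, hαmem⟩)).2 ?_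
        rw [e.apply_symm_apply, hTe]
        exact set_covBy_sdiff (Set.mem_univ j)
      have hnrB : ¬r ≤ (Bj : L) := by
        intro hle
        have h1 := hmin _ Bj.2.1 Bj.2.2 hle
        have h2 : e M ⊆ Set.univ \ {j} := by
          rw [← e.apply_symm_apply (Set.univ \ {j}), ← hBj]
          exact (e_le_iff e (x := M) (y := Bj)).1 h1
        exact (h2 hjM).2 rfl
      have hBγ : (Bj : L) = γ := U1 h α r hr hrα.le _ _ hBcov hcγ hnrB hnr
      have hBe : (Set.univ \ {j} : Set (Fin k)) = Set.univ \ {i₀} := by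
        have := congrArg e (Subtype.ext hBγ : Bj = G)
        rwa [e.apply_symm_apply, hi0] at this
      apply hji
      have : j ∉ (Set.univ \ {j} : Set (Fin k)) := fun hmem => hmem.2 rfl
      rw [hBe] at this
      by_contra hji'
      exact this ⟨trivial, fun hmem => hji' (Set.mem_singleton_iff.1 hmem)⟩
    · intro j hj
      rw [Set.mem_singleton_iff] at hj
      subst hj; exact hi0M
  obtain ⟨mp, hmp, hpmp, hemp, hminp⟩ := key p hp hplt hnp
  obtain ⟨mq, hmq, hqmq, hemq, hminq⟩ := key q hq hqlt hnq
  have hmeq : mp = mq := congrArg Subtype.val (e.injective (hemp.trans hemq.symm))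
  -- `mp < α`
  obtain ⟨c, hpc, hcα⟩ := exists_covBy_of_lt hplt
  have hmpc : mp ≤ c := hminp c (lowMeet_le_of_covBy hcα) hcα.le hpc
  have hmpα : mp < α := lt_of_le_of_lt hmpc hcα.lt
  -- `lowMeet α ⋖ mp`
  have hbotcov : lowMeet α ⋖ mp := by
    refine (e_covBy_iff e (x := ⟨lowMeet α, hamem⟩) (y := ⟨mp, hmp⟩)).2 ?_
    rw [e_bot e hamem, hemp]
    have h1 : i₀ ∉ (∅ : Set (Fin k)) := fun hmem => hmem
    simpa using Set.covBy_insert h1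
  have hnpl : ¬p ≤ lowMeet α := fun hle => hnp (hle.trans (lowMeet_le_of_covBy hcγ))
  have hnql : ¬q ≤ lowMeet α := fun hle => hnq (hle.trans (lowMeet_le_of_covBy hcγ))
  exact IH mp hmpα (lowMeet α) p q hbotcov hp hq hpmp (hmeq ▸ hqmq) hnpl hnql

/-- Removing one element from `S(α)`: the other elements survive in `S(γ)` for a
suitable lower cover `γ` of `α`. -/
lemma lemB (α p : L) (hp : JoinIrred p) (hpα : p ≤ α) (hpn : ¬p ≤ lowMeet α) :
    ∃ γ : L, γ ⋖ α ∧ ∀ q : L, q ∈ SF α → q ≠ p → q ∈ SF γ := by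
  have hN : (NF α).Nonempty := by
    by_contra hN
    rw [lowMeet, dif_neg hN] at hpn
    exact hpn hpα
  have ha : lowMeet α ≤ α := lowMeet_le α
  have hγex : ∃ γ, γ ⋖ α ∧ ¬p ≤ γ := by
    by_contra hno
    push_neg at hno
    exact hpn (le_lowMeet hN fun γ hγ => hno γ hγ)
  obtain ⟨γ, hcγ, hnγ⟩ := hγex
  refine ⟨γ, hcγ, fun q hqS hqp => ?_⟩
  obtain ⟨hq, hqα, hqn⟩ := mem_SF.1 hqS
  have hqγ : q ≤ γ := by
    by_contra hnq
    exact hqp (U2 h α γ q p hcγ hq hp hqα hpα hnq hnγ)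
  refine mem_SF.2 ⟨hq, hqγ, fun hql => ?_⟩
  obtain ⟨k, ⟨e⟩⟩ := get_iso h hN
  have hαmem : α ∈ Set.Icc (lowMeet α) α := ⟨ha, le_rfl⟩
  have hamem : lowMeet α ∈ Set.Icc (lowMeet α) α := ⟨le_rfl, ha⟩
  set G : Set.Icc (lowMeet α) α := ⟨γ, lowMeet_le_of_covBy hcγ, hcγ.le⟩ with hG
  obtain ⟨m, hm1, hm2, hm3, hmin⟩ := exists_min (lowMeet α) α q ha hqα
  set M : Set.Icc (lowMeet α) α := ⟨m, hm1, hm2⟩ with hM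
  have hMG : e M ⊆ e G := (e_le_iff e (x := M) (y := G)).1 (hmin γ G.2.1 G.2.2 hqγ)
  have hMempty : e M = ∅ := by
    by_contra hMne
    obtain ⟨j, hj⟩ := Set.nonempty_iff_ne_empty.2 hMne
    have hjG : j ∈ e G := hMG hj
    set Cj := e.symm (e G \ {j}) with hCj
    have hcCj : (Cj : L) ⋖ γ := by
      refine (e_covBy_iff e (x := Cj) (y := G)).2 ?_
      rw [e.apply_symm_apply]
      exact set_covBy_sdiff hjG
    have hqCj : q ≤ (Cj : L) := hql.trans (lowMeet_le_of_covBy hcCj)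
    have hMC : e M ⊆ e G \ {j} := by
      rw [← e.apply_symm_apply (e G \ {j}), ← hCj]
      exact (e_le_iff e (x := M) (y := Cj)).1 (hmin _ Cj.2.1 Cj.2.2 hqCj)
    exact (hMC hj).2 rfl
  have hMbot : M = ⟨lowMeet α, hamem⟩ := e.injective (by rw [hMempty, e_bot e hamem])
  have hmbot : m = lowMeet α := congrArg Subtype.val hMbot
  exact hqn (hmbot ▸ hm3)

end Aux

/-- `{S(α) : α ∈ L}` is a simplicial complex, i.e. closed under subsets. -/
theorem S_simplicialComplex {L : Type*} [SemilatticeInf L] [Fintype L]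
    (h : MeetDistributive L) :
    ∀ α : L, ∀ T ⊆ SF α, ∃ β : L, T = SF β := by
  intro α
  induction α using WellFoundedLT.induction with
  | _ α IH =>
  intro T hT
  by_cases heq : T = SF α
  · exact ⟨α, heq⟩
  · have hss : T ⊂ SF α := Finset.ssubset_iff_subset_ne.2 ⟨hT, heq⟩
    obtain ⟨p, hpS, hpT⟩ := Finset.exists_of_ssubset hss
    obtain ⟨hp, hpα, hpn⟩ := mem_SF.1 hpS
    obtain ⟨γ, hcγ, hsub⟩ := lemB h α p hp hpα hpn
    exact IH γ hcγ.lt T (fun q hq => hsub q (hT hq) (fun hqp => hpT (hqp ▸ hq)))
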